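/- Let k_1,...,k_n be natural numbers with Σ_i k_i = 2c, let P = {S ⊆ [n] : Σ_{i∈S} k_i = c}, and let ε = 1/2^{n+3}. For weights w_0 = −m/2 − mc and w_i = m·k_i, define F(x) = σ(w_0 + Σ_i w_i x_i) with σ(t) = 1/(1+e^{−t}). If m satisfies 2σ(−m/2) ≤ ε and 1−σ(m/2) ≤ ε, then |P| = ⌈2^n − 2^{n+1}·E_U[F]/(1−ε)⌉, where E_U is expectation under the uniform distribution on {0,1}^n. -/

import Mathlib

open Finset

/-- The logistic function. -/
noncomputable def sigmoid (t : ℝ) : ℝ := 1 / (1 + Real.exp (-t))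
lemma sigmoid_pos (t : ℝ) : 0 < sigmoid t := by unfold sigmoid; positivity
lemma sigmoid_lt_one (t : ℝ) : sigmoid t < 1 := by
  unfold sigmoid
  rw [div_lt_one (by positivity)]
  linarith [Real.exp_pos (-t)]
lemma sigmoid_mono {s t : ℝ} (h : s ≤ t) : sigmoid s ≤ sigmoid t := by
  unfold sigmoid
  apply one_div_le_one_div_of_le (by positivity)
  have := Real.exp_le_exp.2 (neg_le_neg h)
  linarith
lemma sigmoid_zero : sigmoid 0 = 1/2 := by simp [sigmoid]; norm_num

lemma pair_bound {m ε : ℝ} (hm : 0 < m)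
    (hm1 : 2 * sigmoid (-(m/2)) ≤ ε) (hm2 : 1 - sigmoid (m/2) ≤ ε)
    (d : ℝ) (hd : 1 ≤ |d|) :
    1 - ε ≤ sigmoid (m*d - m/2) + sigmoid (-(m*d) - m/2) ∧
      sigmoid (m*d - m/2) + sigmoid (-(m*d) - m/2) ≤ 1 + ε := by
  have hp1 := sigmoid_pos (m*d - m/2)
  have hp2 := sigmoid_pos (-(m*d) - m/2)
  have hl1 := sigmoid_lt_one (m*d - m/2)
  have hl2 := sigmoid_lt_one (-(m*d) - m/2)
  rcases le_abs.mp hd with h | h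
  · have hA : sigmoid (m/2) ≤ sigmoid (m*d - m/2) := sigmoid_mono (by nlinarith)
    have hB : sigmoid (-(m*d) - m/2) ≤ sigmoid (-(m/2)) := sigmoid_mono (by nlinarith)
    constructor <;> nlinarith
  · have hA : sigmoid (m/2) ≤ sigmoid (-(m*d) - m/2) := sigmoid_mono (by nlinarith)
    have hB : sigmoid (m*d - m/2) ≤ sigmoid (-(m/2)) := sigmoid_mono (by nlinarith)
    constructor <;> nlinarith

theorem stmt9 {n : ℕ} (k : Fin n → ℕ) (c : ℕ) (hsum : ∑ i : Fin n, k i = 2 * c)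
    (m : ℝ)
    (hm1 : 2 * sigmoid (-(m / 2)) ≤ (1 : ℝ) / 2 ^ (n + 3))
    (hm2 : 1 - sigmoid (m / 2) ≤ (1 : ℝ) / 2 ^ (n + 3)) :
    ((Finset.univ.powerset.filter
        (fun S : Finset (Fin n) => ∑ i ∈ S, k i = c)).card : ℤ) =
      ⌈(2 ^ n : ℝ) -
        2 ^ (n + 1) *
          ((1 / 2 ^ n) * ∑ x : Fin n → Bool,
            sigmoid ((-(m / 2) - m * c) +
              ∑ i : Fin n, m * (k i : ℝ) * (if x i then 1 else 0))) /
          (1 - (1 : ℝ) / 2 ^ (n + 3))⌉ := by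
  classical
  set ε : ℝ := (1:ℝ)/2^(n+3) with hεdef
  have hE1 : (1:ℝ) ≤ 2^n := one_le_pow₀ (by norm_num)
  have hε8 : ε * (8 * 2^n) = 1 := by
    rw [hεdef, pow_add]
    field_simp
    ring
  have hεpos : 0 < ε := by rw [hεdef]; positivity
  have hεle : ε ≤ 1/8 := by nlinarith
  have hm0 : 0 < m := by
    by_contra h
    push_neg at h
    have h2 : sigmoid (m/2) ≤ sigmoid 0 := sigmoid_mono (by linarith)
    rw [sigmoid_zero] at h2
    linarith
  set N : (Fin n → Bool) → ℕ := fun x => ∑ i, if x i then k i else 0 with hN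
  have hNc : ∀ x : Fin n → Bool, N x + N (fun i => !x i) = 2*c := by
    intro x
    simp only [hN]
    rw [← Finset.sum_add_distrib, ← hsum]
    apply Finset.sum_congr rfl
    intro i _
    have hb : ∀ b : Bool, ((if b = true then k i else 0) + if (!b) = true then k i else 0) = k i := by
      intro b; cases b <;> simp
    exact hb (x i)
  set f : (Fin n → Bool) → ℝ := fun x => sigmoid (m * ((N x : ℝ) - c) - m/2) with hf
  have harg : ∀ x : Fin n → Bool,
      sigmoid ((-(m / 2) - m * c) + ∑ i : Fin n, m * (k i : ℝ) * (if x i then 1 else 0))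
        = f x := by
    intro x
    have hs : ∑ i : Fin n, m * (k i : ℝ) * (if x i then 1 else 0) = m * (N x : ℝ) := by
      simp only [hN]
      push_cast
      rw [Finset.mul_sum]
      apply Finset.sum_congr rfl
      intro i _
      have hb : ∀ b : Bool, m * (k i : ℝ) * (if b = true then 1 else 0)
          = m * (if b = true then (k i : ℝ) else 0) := by
        intro b; cases b <;> simp
      exact hb (x i)
    rw [hf]
    simp only
    rw [hs]
    congr 1
    ring
  set T : ℝ := ∑ x : Fin n → Bool, f x with hT
  have hflipinv : Function.Involutive (fun x : Fin n → Bool => fun i => !x i) := by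
    intro x; funext i; simp
  have hflip : ∑ x : Fin n → Bool, f (fun i => !x i) = T := by
    rw [hT]
    exact Fintype.sum_bijective _ hflipinv.bijective _ _ (fun x => rfl)
  have h2T : 2 * T = ∑ x : Fin n → Bool, (f x + f (fun i => !x i)) := by
    rw [Finset.sum_add_distrib, hflip, hT]; ring
  have hfflip : ∀ x : Fin n → Bool,
      f (fun i => !x i) = sigmoid (-(m * ((N x:ℝ) - c)) - m/2) := by
    intro x
    have h2 : (N (fun i => !x i) : ℝ) = 2*c - N x := by
      have h1 := hNc x
      have := congrArg (Nat.cast (R := ℝ)) h1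
      push_cast at this
      linarith
    rw [hf]
    simp only
    rw [h2]
    congr 1
    ring
  have hpair : ∀ x : Fin n → Bool, N x ≠ c →
      1 - ε ≤ f x + f (fun i => !x i) ∧ f x + f (fun i => !x i) ≤ 1 + ε := by
    intro x hx
    rw [hfflip x, hf]
    simp only
    apply pair_bound hm0 hm1 hm2 ((N x:ℝ) - c)
    rcases lt_or_gt_of_ne hx with h | h
    · rw [le_abs]
      right
      have : N x + 1 ≤ c := h
      have : (N x : ℝ) + 1 ≤ c := by exact_mod_cast this
      linarith
    · rw [le_abs]
      left
      have : c + 1 ≤ N x := h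
      have : (c : ℝ) + 1 ≤ N x := by exact_mod_cast this
      linarith
  have hzero : ∀ x : Fin n → Bool, N x = c →
      0 ≤ f x + f (fun i => !x i) ∧ f x + f (fun i => !x i) ≤ ε := by
    intro x hx
    rw [hfflip x, hf]
    simp only
    rw [hx]
    have hargeq : m * ((c:ℝ) - c) - m/2 = -(m/2) := by ring
    have hargeq2 : -(m * ((c:ℝ) - c)) - m/2 = -(m/2) := by ring
    rw [hargeq, hargeq2]
    constructor
    · linarith [sigmoid_pos (-(m/2))]
    · linarith [hm1]
  set P : Finset (Fin n → Bool) := univ.filter (fun x => N x = c) with hP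
  set Q : Finset (Fin n → Bool) := univ.filter (fun x => ¬(N x = c)) with hQ
  set p := P.card with hp
  set q := Q.card with hq
  have hpq : p + q = 2^n := by
    rw [hp, hq, hP, hQ, Finset.card_filter_add_card_filter_not]
    simp [Finset.card_univ]
  have hsplit : 2*T = (∑ x ∈ P, (f x + f (fun i => !x i)))
      + ∑ x ∈ Q, (f x + f (fun i => !x i)) := by
    rw [h2T, ← Finset.sum_filter_add_sum_filter_not univ (fun x => N x = c)]
  have hPhigh : ∑ x ∈ P, (f x + f (fun i => !x i)) ≤ (p:ℝ) * ε := by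
    calc ∑ x ∈ P, (f x + f (fun i => !x i)) ≤ ∑ _x ∈ P, ε := by
          apply Finset.sum_le_sum
          intro x hx
          exact (hzero x (by simpa [hP] using hx)).2
      _ = (p:ℝ) * ε := by rw [Finset.sum_const, nsmul_eq_mul]
  have hPlow : (0:ℝ) ≤ ∑ x ∈ P, (f x + f (fun i => !x i)) := by
    apply Finset.sum_nonneg
    intro x hx
    exact (hzero x (by simpa [hP] using hx)).1
  have hQhigh : ∑ x ∈ Q, (f x + f (fun i => !x i)) ≤ (q:ℝ) * (1 + ε) := by
    calc ∑ x ∈ Q, (f x + f (fun i => !x i)) ≤ ∑ _x ∈ Q, (1+ε) := by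
          apply Finset.sum_le_sum
          intro x hx
          exact (hpair x (by simpa [hQ] using hx)).2
      _ = (q:ℝ) * (1+ε) := by rw [Finset.sum_const, nsmul_eq_mul]
  have hQlow : (q:ℝ) * (1 - ε) ≤ ∑ x ∈ Q, (f x + f (fun i => !x i)) := by
    calc (q:ℝ) * (1-ε) = ∑ _x ∈ Q, (1-ε) := by rw [Finset.sum_const, nsmul_eq_mul]
      _ ≤ ∑ x ∈ Q, (f x + f (fun i => !x i)) := by
          apply Finset.sum_le_sum
          intro x hx
          exact (hpair x (by simpa [hQ] using hx)).1
  have hlow : (q:ℝ) * (1-ε) ≤ 2*T := by rw [hsplit]; linarith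
  have hhigh : 2*T ≤ (p:ℝ)*ε + (q:ℝ)*(1+ε) := by rw [hsplit]; linarith
  -- card conversion
  have hcard : (Finset.univ.powerset.filter
      (fun S : Finset (Fin n) => ∑ i ∈ S, k i = c)).card = p := by
    rw [hp, hP]
    apply Finset.card_bij' (fun S _ => fun i => decide (i ∈ S))
      (fun x _ => univ.filter (fun i => x i = true))
    · intro S hS
      ext i
      simp
    · intro x hx
      funext i
      simp
    · intro S hS
      simp only [Finset.mem_filter, Finset.mem_powerset, Finset.mem_univ, true_and] at hS ⊢
      simp only [hN, decide_eq_true_eq]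
      rw [Finset.sum_ite_mem, Finset.univ_inter]
      exact hS.2
    · intro x hx
      simp only [Finset.mem_filter, Finset.mem_powerset, Finset.mem_univ, true_and] at hx ⊢
      refine ⟨Finset.filter_subset _ _, ?_⟩
      simp only [hN] at hx
      rw [Finset.sum_filter]
      exact hx
  rw [hcard]
  symm
  rw [Int.ceil_eq_iff]
  have hsum2 : ∑ x : Fin n → Bool,
      sigmoid ((-(m / 2) - m * c) + ∑ i : Fin n, m * (k i : ℝ) * (if x i then 1 else 0)) = T := by
    rw [hT]
    exact Finset.sum_congr rfl (fun x _ => harg x)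
  rw [hsum2]
  have h1mε : (0:ℝ) < 1 - ε := by linarith
  have h2n : (2:ℝ)^(n+1) * ((1/2^n) * T) = 2*T := by
    rw [pow_succ]
    field_simp
  rw [h2n]
  have hpqR : (p:ℝ) + q = 2^n := by exact_mod_cast hpq
  have hu : (2*T/(1-ε)) * (1-ε) = 2*T := div_mul_cancel₀ _ (ne_of_gt h1mε)
  set u : ℝ := 2*T/(1-ε) with huu
  have hp0 : (0:ℝ) ≤ p := Nat.cast_nonneg _
  have hq0 : (0:ℝ) ≤ q := Nat.cast_nonneg _
  constructor
  · have hlt : u * (1-ε) < ((q:ℝ)+1) * (1-ε) := by nlinarith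
    have : u < (q:ℝ)+1 := lt_of_mul_lt_mul_right (by linarith [hlt]) (le_of_lt h1mε)
    push_cast
    linarith
  · have hle : (q:ℝ) * (1-ε) ≤ u * (1-ε) := by rw [hu]; exact hlow
    have : (q:ℝ) ≤ u := le_of_mul_le_mul_right hle h1mε
    push_cast
    linarith
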